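/- If C is a binary code of length m with M codewords, minimum Hamming distance d, closed under complementation, then writing codewords as ±1-vectors yields M/2 lines through the origin in R^m such that the squared cosine of the angle between any two distinct lines is at most (1 − 2d/m)², i.e., min squared chordal distance d_c² ≥ 4d(m−d)/m². -/

import Mathlib

open Finset

/-- The `±1`-vector associated to a binary word `w` of length `m`. -/
def signVec (m : ℕ) (w : Fin m → Bool) : Fin m → ℝ :=
  fun i => if w i then (-1 : ℝ) else 1

/-- The line through the origin in `ℝ^m` spanned by the `±1`-vector of `w`. -/
def codeLine (m : ℕ) (w : Fin m → Bool) : Submodule ℝ (Fin m → ℝ) :=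
  Submodule.span ℝ {signVec m w}

lemma signVec_not (m : ℕ) (w : Fin m → Bool) :
    signVec m (fun i => !w i) = -signVec m w := by
  funext i; unfold signVec; cases hw : w i <;> simp [hw]

lemma codeLine_not (m : ℕ) (w : Fin m → Bool) :
    codeLine m (fun i => !w i) = codeLine m w := by
  unfold codeLine
  rw [signVec_not]
  ext x
  simp only [Submodule.mem_span_singleton]
  constructor
  · rintro ⟨a, rfl⟩; exact ⟨-a, by simp⟩
  · rintro ⟨a, rfl⟩; exact ⟨-a, by simp⟩

lemma codeLine_eq_iff (m : ℕ) (hm : 0 < m) (w w' : Fin m → Bool)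
    (h : codeLine m w = codeLine m w') : w' = w ∨ w' = fun i => !w i := by
  have hmem : signVec m w' ∈ codeLine m w := by
    rw [h]; exact Submodule.mem_span_singleton_self _
  rw [codeLine, Submodule.mem_span_singleton] at hmem
  obtain ⟨a, ha⟩ := hmem
  set i0 : Fin m := ⟨0, hm⟩
  have h0 : a * signVec m w i0 = signVec m w' i0 := congrFun ha i0
  have ha1 : a = 1 ∨ a = -1 := by
    unfold signVec at h0
    cases hw : w i0 <;> cases hw' : w' i0 <;> simp [hw, hw'] at h0 <;>
      first | (left; linarith) | (right; linarith)
  rcases ha1 with rfl | rfl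
  · left
    funext i
    have := congrFun ha i
    simp only [Pi.smul_apply, one_smul, signVec] at this
    cases hwi : w i <;> cases hwi' : w' i <;> simp [hwi, hwi'] at this ⊢ <;> norm_num at this
  · right
    funext i
    have := congrFun ha i
    simp only [Pi.smul_apply, smul_eq_mul, signVec] at this
    cases hwi : w i <;> cases hwi' : w' i <;> simp [hwi, hwi'] at this ⊢ <;> norm_num at this

lemma sum_signVec_eq (m : ℕ) (w w' : Fin m → Bool) :
    (∑ i, signVec m w i * signVec m w' i) = (m : ℝ) - 2 * hammingDist w w' := by
  classical
  have hterm : ∀ i, signVec m w i * signVec m w' i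
      = (if w i = w' i then (1:ℝ) else -1) := by
    intro i; unfold signVec; cases w i <;> cases w' i <;> simp
  rw [Finset.sum_congr rfl fun i _ => hterm i, Finset.sum_ite, Finset.sum_const,
    Finset.sum_const]
  have hham : hammingDist w w' = (Finset.univ.filter fun i => ¬ w i = w' i).card := rfl
  have hsplit : (Finset.univ.filter fun i => w i = w' i).card
      + (Finset.univ.filter fun i => ¬ w i = w' i).card = m := by
    rw [Finset.card_filter_add_card_filter_not, Finset.card_univ, Fintype.card_fin]
  rw [hham]
  have hc : ((Finset.univ.filter fun i => w i = w' i).card : ℝ)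
      + ((Finset.univ.filter fun i => ¬ w i = w' i).card : ℝ) = m := by
    exact_mod_cast hsplit
  simp only [nsmul_eq_mul, mul_one, mul_neg_one]
  linarith

lemma hammingDist_not_right (m : ℕ) (w w' : Fin m → Bool) :
    hammingDist w w' + hammingDist w (fun i => !w' i) = m := by
  classical
  have h2 : hammingDist w (fun i => !w' i)
      = (Finset.univ.filter fun i => w i = w' i).card := by
    unfold hammingDist
    congr 1
    ext i
    cases w i <;> cases w' i <;> simp
  rw [h2, hammingDist, add_comm]
  show (Finset.univ.filter fun i => w i = w' i).card
      + (Finset.univ.filter fun i => ¬ w i = w' i).card = m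
  rw [Finset.card_filter_add_card_filter_not, Finset.card_univ, Fintype.card_fin]

/-- If `C` is a binary code of length `m` with `M` codewords and minimum Hamming
distance `d`, closed under complementation, then the `±1`-vectors of the codewords
span `M/2` lines through the origin in `ℝ^m`, and for any two codewords spanning
distinct lines the squared cosine of the angle between the lines is at most
`(1 - 2d/m)²`; equivalently the squared chordal distance `1 - (u·v)²` is at least
`4d(m-d)/m²`. -/
theorem lines_from_binary_code (m M d : ℕ) (hm : 0 < m)
    (C : Finset (Fin m → Bool))
    (hM : C.card = M)
    (hcompl : ∀ w ∈ C, (fun i => ! w i) ∈ C)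
    (hd : ∀ w ∈ C, ∀ w' ∈ C, w ≠ w' → d ≤ hammingDist w w') (hd0 : 0 < d) :
    (@Finset.image _ _ (Classical.decEq _) (codeLine m) C).card = M / 2 ∧
    ∀ w ∈ C, ∀ w' ∈ C, codeLine m w ≠ codeLine m w' →
      ((∑ i, signVec m w i * signVec m w' i) / m) ^ 2
          ≤ (1 - 2 * (d : ℝ) / m) ^ 2 ∧
      4 * (d : ℝ) * ((m : ℝ) - d) / (m : ℝ) ^ 2 ≤
        1 - ((∑ i, signVec m w i * signVec m w' i) / m) ^ 2 := by
  classical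
  have hmr : (0 : ℝ) < m := by exact_mod_cast hm
  constructor
  · -- cardinality
    have key : ∀ w ∈ C, (C.filter fun x => codeLine m x = codeLine m w)
        = {w, fun i => !w i} := by
      intro w hw
      ext x
      simp only [Finset.mem_filter, Finset.mem_insert, Finset.mem_singleton]
      constructor
      · rintro ⟨hx, hfx⟩
        rcases codeLine_eq_iff m hm x w hfx with h | h
        · left; exact h.symm
        · right; funext i; rw [h]; simp
      · rintro (rfl | rfl)
        · exact ⟨hw, rfl⟩
        · exact ⟨hcompl w hw, codeLine_not m w⟩
    have hne : ∀ w : Fin m → Bool, w ≠ fun i => !w i := by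
      intro w h
      have := congrFun h ⟨0, hm⟩
      cases hw : w ⟨0, hm⟩ <;> rw [hw] at this <;> simp at this
    have hsum : C.card = ∑ b ∈ C.image (codeLine m),
        (C.filter fun x => codeLine m x = b).card :=
      Finset.card_eq_sum_card_image _ _
    have hsum2 : ∀ b ∈ C.image (codeLine m),
        (C.filter fun x => codeLine m x = b).card = 2 := by
      intro b hb
      obtain ⟨w, hw, rfl⟩ := Finset.mem_image.mp hb
      rw [key w hw]
      rw [Finset.card_insert_of_notMem (by simp [hne w]), Finset.card_singleton]
    rw [Finset.sum_congr rfl hsum2, Finset.sum_const, smul_eq_mul] at hsum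
    have : (C.image (codeLine m)).card * 2 = M := by omega
    have hMeq : M = 2 * (C.image (codeLine m)).card := by omega
    have : (Finset.image (codeLine m) C).card = M / 2 := by omega
    convert this
  · intro w hw w' hw' hne
    have hww' : w ≠ w' := by rintro rfl; exact hne rfl
    have hwn : w ≠ fun i => !w' i := by
      rintro rfl
      exact hne (codeLine_not m w')
    have h1 : d ≤ hammingDist w w' := hd w hw w' hw' hww'
    have h2 : d ≤ hammingDist w (fun i => !w' i) :=
      hd w hw _ (hcompl w' hw') hwn
    have h3 : hammingDist w w' + hammingDist w (fun i => !w' i) = m :=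
      hammingDist_not_right m w w'
    set h := hammingDist w w' with hh
    have hhm : h ≤ m - d := by omega
    have hdm : d ≤ m := by omega
    rw [sum_signVec_eq]
    have h1r : (d : ℝ) ≤ h := by exact_mod_cast h1
    have h2r : (h : ℝ) ≤ (m : ℝ) - d := by
      have : h + d ≤ m := by omega
      have := (by exact_mod_cast this : (h : ℝ) + d ≤ m)
      linarith
    have key : (((m : ℝ) - 2 * h) / m) ^ 2 ≤ (1 - 2 * (d : ℝ) / m) ^ 2 := by
      have hsq : ((m : ℝ) - 2 * h) ^ 2 ≤ ((m : ℝ) - 2 * d) ^ 2 :=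
        sq_le_sq' (by linarith) (by linarith)
      have : (1 - 2 * (d : ℝ) / m) = ((m : ℝ) - 2 * d) / m := by
        field_simp
      rw [this, div_pow, div_pow]
      exact div_le_div_of_nonneg_right hsq (by positivity) |>.trans_eq rfl
    refine ⟨key, ?_⟩
    have halg : 1 - (1 - 2 * (d : ℝ) / m) ^ 2
        = 4 * (d : ℝ) * ((m : ℝ) - d) / (m : ℝ) ^ 2 := by
      field_simp
      ring
    linarith
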